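/- arXiv:1602.08590 — 4 statements merged into one kernel-verified Lean document; each statement's English description precedes it below -/
import Mathlib

section
/- Let p(x) = exp(-g(x))/Z be a log-concave probability density on ℝⁿ with g convex attaining its minimum at x̂. Then the expectation of g under p satisfies E[g(x)] ≤ g(x̂) + n. -/
open MeasureTheory Real Filter

lemma bm_aux (n : ℕ) (G : (Fin n → ℝ) → ℝ) (hG : ConvexOn ℝ Set.univ G)
    (hcont : Continuous G) (xhat : Fin n → ℝ) (hGxhat : G xhat = 0)
    (hGnn : ∀ x, 0 ≤ G x)
    (hIe : Integrable (fun x : Fin n → ℝ => Real.exp (-G x)))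
    (hIg : Integrable (fun x : Fin n → ℝ => G x * Real.exp (-G x))) :
    ∫ x, G x * Real.exp (-G x) ≤ n * ∫ x, Real.exp (-G x) := by
  set Z : ℝ := ∫ x, Real.exp (-G x) with hZdef
  set I : ℝ := ∫ x, G x * Real.exp (-G x) with hIdef
  have hZnn : 0 ≤ Z := integral_nonneg fun x => (Real.exp_pos _).le
  have key : ∀ l : ℝ, 1 < l → I ≤ l * (∑ k ∈ Finset.range n, l ^ k) * Z := by
    intro l hl
    have hl0 : 0 < l := lt_trans one_pos hl
    set b : Fin n → ℝ := xhat - l⁻¹ • xhat with hb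
    -- convexity step
    have hconv : ∀ x : Fin n → ℝ, G (l⁻¹ • x + b) ≤ G x / l := by
      intro x
      have h1 : (0:ℝ) ≤ l⁻¹ := by positivity
      have h2 : (0:ℝ) ≤ 1 - l⁻¹ := by
        rw [sub_nonneg]; exact inv_le_one_of_one_le₀ hl.le
      have := hG.2 (Set.mem_univ x) (Set.mem_univ xhat) h1 h2 (by ring)
      have heq : l⁻¹ • x + (1 - l⁻¹) • xhat = l⁻¹ • x + b := by
        rw [hb]; module
      rw [heq, hGxhat, smul_eq_mul, smul_eq_mul, mul_zero, add_zero] at this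
      linarith [this, (div_eq_inv_mul (G x) l).symm ▸ this]
    -- pointwise inequality
    have hpt : ∀ x : Fin n → ℝ,
        Real.exp (-G x) + (1 - l⁻¹) * (G x * Real.exp (-G x))
          ≤ Real.exp (-G (l⁻¹ • x + b)) := by
      intro x
      have h2 : (0:ℝ) ≤ 1 - l⁻¹ := by
        rw [sub_nonneg]; exact inv_le_one_of_one_le₀ hl.le
      have ht : (0:ℝ) ≤ (1 - l⁻¹) * G x := mul_nonneg h2 (hGnn x)
      have e1 : Real.exp (-G x) + (1 - l⁻¹) * (G x * Real.exp (-G x))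
          ≤ Real.exp (-(G x / l)) := by
        have := Real.add_one_le_exp ((1 - l⁻¹) * G x)
        have hexp : Real.exp (-(G x / l)) = Real.exp (-G x) * Real.exp ((1 - l⁻¹) * G x) := by
          rw [← Real.exp_add]; congr 1; field_simp; ring
        rw [hexp]
        nlinarith [Real.exp_pos (-G x), this]
      refine e1.trans (Real.exp_le_exp.mpr (by simpa using neg_le_neg (hconv x)))
    -- integrability of the RHS
    have hmble : Continuous fun x : Fin n → ℝ => Real.exp (-G (l⁻¹ • x + b)) := by
      fun_prop
    have hIR : Integrable (fun x : Fin n → ℝ => Real.exp (-G (l⁻¹ • x + b))) := by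
      have h1 : Integrable (fun y : Fin n → ℝ => Real.exp (-G (y + b))) :=
        ((measurePreserving_add_right volume b).integrable_comp
          (hcont.neg.rexp.aestronglyMeasurable)).2 hIe
      have := (integrable_comp_smul_iff (volume : Measure (Fin n → ℝ))
          (fun y => Real.exp (-G (y + b))) (R := l⁻¹) (by positivity)).2 h1
      simpa using this
    have hIL : Integrable (fun x : Fin n → ℝ =>
        Real.exp (-G x) + (1 - l⁻¹) * (G x * Real.exp (-G x))) :=
      hIe.add (hIg.const_mul _)
    -- integral inequality
    have hint : Z + (1 - l⁻¹) * I ≤ l ^ n * Z := by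
      have h1 : ∫ x, (Real.exp (-G x) + (1 - l⁻¹) * (G x * Real.exp (-G x)))
          ≤ ∫ x, Real.exp (-G (l⁻¹ • x + b)) :=
        integral_mono hIL hIR hpt
      have h2 : ∫ x, (Real.exp (-G x) + (1 - l⁻¹) * (G x * Real.exp (-G x)))
          = Z + (1 - l⁻¹) * I := by
        rw [integral_add hIe (hIg.const_mul _), integral_const_mul]
      have h3 : (∫ x : Fin n → ℝ, Real.exp (-G (l⁻¹ • x + b))) = l ^ n * Z := by
        have := Measure.integral_comp_inv_smul_of_nonneg (volume : Measure (Fin n → ℝ))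
          (fun y => Real.exp (-G (y + b))) hl0.le
        rw [Module.finrank_fin_fun] at this
        calc (∫ x : Fin n → ℝ, Real.exp (-G (l⁻¹ • x + b)))
            = ∫ x : Fin n → ℝ, (fun y => Real.exp (-G (y + b))) (l⁻¹ • x) := by rfl
          _ = l ^ n • ∫ y : Fin n → ℝ, Real.exp (-G (y + b)) := this
          _ = l ^ n * Z := by
              rw [smul_eq_mul, integral_add_right_eq_self (fun y => Real.exp (-G y)) b]
      linarith [h2 ▸ (h3 ▸ h1)]
    -- rearrange
    have hlpos : 0 < 1 - l⁻¹ := by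
      rw [sub_pos]; exact inv_lt_one_of_one_lt₀ hl
    have hgeom : (∑ k ∈ Finset.range n, l ^ k) = (l ^ n - 1) / (l - 1) :=
      geom_sum_eq hl.ne' n
    rw [hgeom]
    have h4 : I ≤ ((l ^ n - 1) * Z) / (1 - l⁻¹) :=
      (le_div_iff₀ hlpos).2 (by nlinarith)
    have hll : ((l ^ n - 1) * Z) / (1 - l⁻¹) = l * ((l ^ n - 1) / (l - 1)) * Z := by
      have h5 : l - 1 ≠ 0 := by linarith
      have h6 : (1:ℝ) - l⁻¹ ≠ 0 := ne_of_gt hlpos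
      field_simp
    rw [← hll]; exact h4
  -- take the limit l → 1⁺
  have hT : Tendsto (fun l : ℝ => l * (∑ k ∈ Finset.range n, l ^ k) * Z)
      (nhdsWithin 1 (Set.Ioi 1)) (nhds ((n : ℝ) * Z)) := by
    have hc : Continuous (fun l : ℝ => l * (∑ k ∈ Finset.range n, l ^ k) * Z) := by
      continuity
    have := hc.tendsto 1
    simp only [one_mul, one_pow, Finset.sum_const, Finset.card_range, nsmul_eq_mul,
      mul_one] at this
    exact this.mono_left nhdsWithin_le_nhds
  exact ge_of_tendsto hT (eventually_nhdsWithin_of_forall fun l hl => key l hl)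

/-- Bobkov–Madiman mean bound: for a log-concave probability density
`p(x) = exp(-g x)/Z` on ℝⁿ with `g` convex minimized at `x̂`,
the expectation of `g` under `p` is at most `g x̂ + n`. -/
theorem expectation_le_min_add_dim
    (n : ℕ) (g : (Fin n → ℝ) → ℝ) (hg : ConvexOn ℝ Set.univ g)
    (Z : ℝ) (hZpos : 0 < Z)
    (hZ : Z = ∫ x : Fin n → ℝ, Real.exp (-g x))
    (hprob : ∫ x : Fin n → ℝ, Real.exp (-g x) / Z = 1)
    (xhat : Fin n → ℝ) (hmin : ∀ x, g xhat ≤ g x)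
    (hint : Integrable (fun x : Fin n → ℝ => g x * (Real.exp (-g x) / Z))) :
    (∫ x : Fin n → ℝ, g x * (Real.exp (-g x) / Z)) ≤ g xhat + n := by
  set c : ℝ := g xhat with hc
  have hZne : Z ≠ 0 := ne_of_gt hZpos
  have hZint : Integrable (fun x : Fin n → ℝ => Real.exp (-g x)) := by
    by_contra h
    rw [integral_undef h] at hZ
    exact hZne hZ
  have hgint : Integrable (fun x : Fin n → ℝ => g x * Real.exp (-g x)) := by
    have h := hint.const_mul Z
    have he : (fun x : Fin n → ℝ => g x * Real.exp (-g x))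
        = fun x => Z * (g x * (Real.exp (-g x) / Z)) := by
      funext x; field_simp
    rw [he]; exact h
  have hcont : Continuous g := continuousOn_univ.1 (hg.continuousOn isOpen_univ)
  set G : (Fin n → ℝ) → ℝ := fun x => g x - c with hGdef
  have hGconv : ConvexOn ℝ Set.univ G := hg.sub (concaveOn_const c convex_univ)
  have hGcont : Continuous G := hcont.sub continuous_const
  have heG : ∀ x, Real.exp (-G x) = Real.exp c * Real.exp (-g x) := by
    intro x
    rw [← Real.exp_add, hGdef]; ring_nf
  have hIe : Integrable (fun x : Fin n → ℝ => Real.exp (-G x)) := by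
    have := hZint.const_mul (Real.exp c)
    refine this.congr ?_
    filter_upwards with x using (heG x).symm
  have hIgeq : (fun x : Fin n → ℝ => G x * Real.exp (-G x))
      = fun x => Real.exp c * (g x * Real.exp (-g x)) - (c * Real.exp c) * Real.exp (-g x) := by
    funext x; rw [heG x, hGdef]; ring
  have hIg : Integrable (fun x : Fin n → ℝ => G x * Real.exp (-G x)) := by
    rw [hIgeq]
    exact (hgint.const_mul _).sub (hZint.const_mul _)
  have haux := bm_aux n G hGconv hGcont xhat (by simp [hGdef, hc]) (fun x => sub_nonneg.2 (hmin x))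
    hIe hIg
  have hZG : (∫ x : Fin n → ℝ, Real.exp (-G x)) = Real.exp c * Z := by
    calc (∫ x : Fin n → ℝ, Real.exp (-G x))
        = ∫ x : Fin n → ℝ, Real.exp c * Real.exp (-g x) := by
          congr 1; funext x; exact heG x
      _ = Real.exp c * ∫ x : Fin n → ℝ, Real.exp (-g x) := integral_const_mul _ _
      _ = Real.exp c * Z := by rw [← hZ]
  have hIG : (∫ x : Fin n → ℝ, G x * Real.exp (-G x))
      = Real.exp c * (∫ x : Fin n → ℝ, g x * Real.exp (-g x)) - c * Real.exp c * Z := by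
    rw [hIgeq, integral_sub (hgint.const_mul _) (hZint.const_mul _),
      integral_const_mul, integral_const_mul, ← hZ]
  rw [hIG, hZG] at haux
  have hec : 0 < Real.exp c := Real.exp_pos c
  have hmain : (∫ x : Fin n → ℝ, g x * Real.exp (-g x)) ≤ (c + n) * Z := by nlinarith
  have hfin : (∫ x : Fin n → ℝ, g x * (Real.exp (-g x) / Z))
      = (∫ x : Fin n → ℝ, g x * Real.exp (-g x)) / Z := by
    rw [← integral_div]
    congr 1; funext x; ring
  rw [hfin, div_le_iff₀ hZpos]
  linarith
end

section
/- Let p(x) = exp(-g(x))/Z be a log-concave probability density on ℝ (dimension n = 1) with g convex attaining its minimum at x̂. Then E[g(x)] ≤ g(x̂) + 1. -/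
open MeasureTheory Real Filter Topology

/-- One-dimensional case of the mean bound: for a log-concave probability
density `p = exp(-g)/Z` on ℝ with `g` convex minimized at `x̂`,
`E[g] ≤ g x̂ + 1`. -/
theorem expectation_le_min_add_one
    (g : ℝ → ℝ) (hg : ConvexOn ℝ Set.univ g)
    (Z : ℝ) (hZpos : 0 < Z)
    (hZ : Z = ∫ x : ℝ, Real.exp (-g x))
    (hprob : ∫ x : ℝ, Real.exp (-g x) / Z = 1)
    (xhat : ℝ) (hmin : ∀ x, g xhat ≤ g x)
    (hint : Integrable (fun x : ℝ => g x * (Real.exp (-g x) / Z))) :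
    (∫ x : ℝ, g x * (Real.exp (-g x) / Z)) ≤ g xhat + 1 := by
  set m := g xhat with hm
  have hgc : Continuous g := by
    rw [← continuousOn_univ]
    exact hg.continuousOn isOpen_univ
  have hInt1 : Integrable (fun x : ℝ => Real.exp (-g x)) := by
    by_contra h
    rw [integral_undef h] at hZ
    linarith
  have hIntA : Integrable (fun x : ℝ => g x * Real.exp (-g x)) := by
    have h := hint.mul_const Z
    refine h.congr ?_
    filter_upwards with x
    field_simp
  set A := ∫ x : ℝ, g x * Real.exp (-g x) with hA
  set f : ℝ → ℝ := fun β => Real.exp ((1 - β) * m) / β with hf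
  have key : ∀ β : ℝ, β ∈ Set.Ioo (0:ℝ) 1 →
      (1 - β) * A ≤ (f β - 1) * Z := by
    intro β hβ
    obtain ⟨hβ0, hβ1⟩ := hβ
    set c := (1 - β) * xhat with hc
    have hIntShift : Integrable (fun y : ℝ => Real.exp (-g (y + c))) := by
      have hmp := measurePreserving_add_right (volume : Measure ℝ) c
      exact (hmp.integrable_comp hInt1.aestronglyMeasurable).2 hInt1
    have hIntT : Integrable (fun x : ℝ => Real.exp (-g (β * x + c))) :=
      (integrable_comp_mul_left_iff (fun y => Real.exp (-g (y + c))) hβ0.ne').2 hIntShift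
    have hconv : ∀ x : ℝ, Real.exp (-(β * g x)) ≤
        Real.exp ((1 - β) * m) * Real.exp (-g (β * x + c)) := by
      intro x
      have h2 : g (β * x + c) ≤ β * g x + (1 - β) * m := by
        have := hg.2 (Set.mem_univ x) (Set.mem_univ xhat) hβ0.le
          (by linarith : (0:ℝ) ≤ 1 - β) (by ring)
        simpa [smul_eq_mul, hc, mul_comm] using this
      rw [← Real.exp_add]
      exact Real.exp_le_exp.2 (by linarith)
    have hIntβ : Integrable (fun x : ℝ => Real.exp (-(β * g x))) := by
      refine Integrable.mono' (hIntT.const_mul (Real.exp ((1 - β) * m))) ?_ ?_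
      · exact (Real.continuous_exp.comp (continuous_const.mul hgc : Continuous fun x => β * g x).neg).aestronglyMeasurable
      · filter_upwards with x
        rw [Real.norm_eq_abs, abs_of_nonneg (Real.exp_pos _).le]
        exact hconv x
    have hpt : ∀ x : ℝ, (1 - β) * (g x * Real.exp (-g x)) ≤
        Real.exp (-(β * g x)) - Real.exp (-g x) := by
      intro x
      set t := g x with ht
      have h1 : (1 - β) * t + 1 ≤ Real.exp ((1 - β) * t) := Real.add_one_le_exp _
      have h2 : Real.exp (-(β * t)) = Real.exp (-t) * Real.exp ((1 - β) * t) := by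
        rw [← Real.exp_add]; ring_nf
      nlinarith [Real.exp_pos (-t)]
    have hint2 : (1 - β) * A ≤ (∫ x : ℝ, Real.exp (-(β * g x))) - Z := by
      have hmono := integral_mono (hIntA.const_mul (1 - β)) (hIntβ.sub hInt1) hpt
      simp only [Pi.sub_apply] at hmono
      rw [integral_sub hIntβ hInt1, integral_const_mul] at hmono
      linarith [hmono]
    have hcv : (∫ x : ℝ, Real.exp (-g (β * x + c))) = β⁻¹ * Z := by
      have h1 := Measure.integral_comp_mul_left (fun y : ℝ => Real.exp (-g (y + c))) β
      have h2 : (∫ y : ℝ, Real.exp (-g (y + c))) = ∫ y : ℝ, Real.exp (-g y) :=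
        integral_add_right_eq_self (fun y : ℝ => Real.exp (-g y)) c
      rw [h2, ← hZ] at h1
      rw [show (fun x : ℝ => Real.exp (-g (β * x + c))) =
        (fun x : ℝ => (fun y : ℝ => Real.exp (-g (y + c))) (β * x)) from rfl]
      rw [h1, abs_of_pos (inv_pos.2 hβ0), smul_eq_mul]
    have hint3 : (∫ x : ℝ, Real.exp (-(β * g x))) ≤ Real.exp ((1 - β) * m) / β * Z := by
      have hmono := integral_mono hIntβ (hIntT.const_mul (Real.exp ((1 - β) * m))) hconv
      rw [integral_const_mul, hcv] at hmono
      calc (∫ x : ℝ, Real.exp (-(β * g x))) ≤ Real.exp ((1 - β) * m) * (β⁻¹ * Z) := hmono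
        _ = Real.exp ((1 - β) * m) / β * Z := by ring
    have : (f β - 1) * Z = Real.exp ((1 - β) * m) / β * Z - Z := by
      simp only [hf]; ring
    rw [this]
    linarith
  have hlim : A ≤ (m + 1) * Z := by
    have hder : HasDerivAt f (-m - 1) 1 := by
      have h1 : HasDerivAt (fun β : ℝ => (1 - β) * m) (-m) 1 := by
        simpa using ((hasDerivAt_id (1:ℝ)).const_sub 1).mul_const m
      have h2 := h1.exp
      have h3 : HasDerivAt (fun β : ℝ => β⁻¹) (-1) (1:ℝ) := by
        have h := hasDerivAt_inv (one_ne_zero (α := ℝ))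
        norm_num at h
        exact h
      have h4 := h2.mul h3
      have : f = fun β : ℝ => Real.exp ((1 - β) * m) * β⁻¹ := by
        funext β; simp [hf, div_eq_mul_inv]
      rw [this]
      refine h4.congr_deriv ?_
      simp
      ring
    have hslope := hasDerivAt_iff_tendsto_slope.1 hder
    have hsub : 𝓝[<] (1:ℝ) ≤ 𝓝[≠] (1:ℝ) :=
      nhdsWithin_mono _ (fun x hx => ne_of_lt hx)
    have htend : Tendsto (fun β => Z * (-(slope f 1 β))) (𝓝[<] (1:ℝ))
        (𝓝 ((m + 1) * Z)) := by
      have h := ((hslope.mono_left hsub).neg).const_mul Z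
      have : Z * -(-m - 1) = (m + 1) * Z := by ring
      rwa [this] at h
    haveI : (𝓝[<] (1:ℝ)).NeBot := nhdsLT_neBot 1
    refine ge_of_tendsto htend ?_
    have hmem : Set.Ioo (0:ℝ) 1 ∈ 𝓝[<] (1:ℝ) :=
      Ioo_mem_nhdsLT_of_mem (by constructor <;> norm_num)
    filter_upwards [hmem] with β hβ
    have hk := key β hβ
    have hβ1 : β < 1 := hβ.2
    have hf1 : f 1 = 1 := by simp [hf]
    have hsl : slope f 1 β = (f β - 1) / (β - 1) := by
      rw [slope_def_field, hf1]
    rw [hsl, ← sub_nonneg]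
    have hne : β - 1 ≠ 0 := by linarith
    have hne' : (1:ℝ) - β ≠ 0 := by linarith
    obtain ⟨t, ht⟩ : ∃ t, f β = t := ⟨_, rfl⟩
    rw [ht] at hk ⊢
    have : Z * -((t - 1) / (β - 1)) - A =
        ((t - 1) * Z - (1 - β) * A) / (1 - β) := by
      field_simp
      ring
    rw [this]
    apply div_nonneg (by linarith) (by linarith)
  have hrw : (∫ x : ℝ, g x * (Real.exp (-g x) / Z)) = A * Z⁻¹ := by
    rw [hA, ← integral_mul_const]
    congr 1
    funext x
    ring
  rw [hrw, ← div_eq_mul_inv, div_le_iff₀ hZpos]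
  linarith
end

section
/- Let p(x|y) = exp(-g(x))/Z be a log-concave posterior density on ℝⁿ with MAP estimator x̂ minimizing g, and let γ_α be the HPD threshold, i.e. P(g(X) ≤ γ_α) = 1 − α. Assume the concentration bound P(g(X) ≥ E[g(X)] + τn) ≤ 3·exp(−τ²n/16) holds for all τ ∈ [0,2], and E[g(X)] ≤ g(x̂) + n. Then for α ∈ (4·exp(−n/3), 1), with τ_α = √(16·log(3/α)/n), the set C̃_α = {x : g(x) ≤ g(x̂) + n(τ_α + 1)} satisfies P(X ∈ C̃_α) ≥ 1 − α, and consequently the HPD region C*_α = {x : g(x) ≤ γ_α} is contained in C̃_α. -/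
open MeasureTheory Real
open scoped ENNReal

lemma aux_one_add_le_exp {τ : ℝ} (h0 : 0 ≤ τ) (h8 : τ ≤ 8) :
    1 + τ ≤ Real.exp (τ - τ^2/16) := by
  set y := τ - τ^2/16 with hy
  have hy2 : τ/2 ≤ y := by rw [hy]; nlinarith
  have h1 : 1 + y/2 ≤ Real.exp (y/2) := by
    have := Real.add_one_le_exp (y/2); linarith
  have h3 : (0:ℝ) ≤ 1 + y/2 := by nlinarith
  have h2 : Real.exp (y/2) * Real.exp (y/2) = Real.exp y := by
    rw [← Real.exp_add]; ring_nf
  nlinarith [mul_le_mul h1 h1 h3 (Real.exp_nonneg (y/2))]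

lemma aux_lintegral_homothety {n : ℕ} (f : (Fin n → ℝ) → ℝ≥0∞) (xhat : Fin n → ℝ)
    {c : ℝ} (hc : 0 < c) :
    ∫⁻ x, f (xhat + c • (x - xhat)) = ENNReal.ofReal ((c ^ n)⁻¹) * ∫⁻ y, f y := by
  have hc0 : c ≠ 0 := ne_of_gt hc
  have hpt : ∀ x : Fin n → ℝ, xhat + c • (x - xhat) = c • (x + (c⁻¹ • xhat - xhat)) := by
    intro x
    ext i
    simp only [Pi.add_apply, Pi.smul_apply, Pi.sub_apply, smul_eq_mul]
    field_simp
    ring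
  simp_rw [hpt]
  rw [lintegral_add_right_eq_self (fun x => f (c • x)) (c⁻¹ • xhat - xhat)]
  calc ∫⁻ x, f (c • x)
      = ∫⁻ y, f y ∂(Measure.map (fun x : Fin n → ℝ => c • x) volume) :=
        (lintegral_map_equiv f
          (Homeomorph.smul (isUnit_iff_ne_zero.2 hc0).unit).toMeasurableEquiv).symm
    _ = ENNReal.ofReal ((c ^ n)⁻¹) * ∫⁻ y, f y := by
        rw [Measure.map_addHaar_smul volume hc0]
        rw [lintegral_smul_measure]
        congr 2
        · rw [Module.finrank_fin_fun, abs_of_pos (by positivity)]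

set_option maxHeartbeats 2000000 in
/-- Theorem 3.1 of the paper: under the Bobkov–Madiman concentration inequality
and the mean bound `E[g] ≤ g(x̂) + n`, the set
`C̃_α = {x : g x ≤ g x̂ + n(τ_α + 1)}` with `τ_α = √(16 log(3/α)/n)` has
posterior probability at least `1 − α` and contains the HPD region
`C*_α = {x : g x ≤ γ_α}`. -/
theorem conservative_credible_region
    (n : ℕ) (hn : 0 < n)
    (g : (Fin n → ℝ) → ℝ) (hg : ConvexOn ℝ Set.univ g) (hgm : Measurable g)
    (Z : ℝ) (hZpos : 0 < Z)
    (μ : Measure (Fin n → ℝ)) [IsProbabilityMeasure μ]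
    (hdens : μ = (volume : Measure (Fin n → ℝ)).withDensity
        (fun x => ENNReal.ofReal (Real.exp (-g x) / Z)))
    (xhat : Fin n → ℝ) (hmin : ∀ x, g xhat ≤ g x)
    (hint : Integrable g μ)
    (hconc : ∀ τ : ℝ, τ ∈ Set.Icc (0:ℝ) 2 →
      (μ {x | g x ≥ (∫ x', g x' ∂μ) + τ * n}).toReal
        ≤ 3 * Real.exp (-τ^2 * n / 16))
    (hmeanbd : (∫ x, g x ∂μ) ≤ g xhat + n)
    (α : ℝ) (hα : α ∈ Set.Ioo (4 * Real.exp (-(n:ℝ)/3)) 1)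
    (γα : ℝ) (hγα : (μ {x | g x ≤ γα}).toReal = 1 - α) :
    (μ {x | g x ≤ g xhat + n * (Real.sqrt (16 * Real.log (3/α) / n) + 1)}).toReal
        ≥ 1 - α
    ∧ {x | g x ≤ γα}
        ⊆ {x | g x ≤ g xhat + n * (Real.sqrt (16 * Real.log (3/α) / n) + 1)} := by
  have hα0 : 0 < α := lt_trans (by positivity) hα.1
  have hα1 : α < 1 := hα.2
  have hn0 : (0:ℝ) < n := Nat.cast_pos.mpr hn
  have hnne : (n:ℝ) ≠ 0 := ne_of_gt hn0
  set τ := Real.sqrt (16 * Real.log (3/α) / n) with hτdef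
  set T := g xhat + n * (τ + 1) with hTdef
  -- basic facts about τ
  have hlog0 : 0 ≤ Real.log (3/α) := by
    apply Real.log_nonneg
    rw [le_div_iff₀ hα0]; linarith
  have hτ0 : 0 ≤ τ := Real.sqrt_nonneg _
  have hτsq : τ^2 = 16 * Real.log (3/α) / n := Real.sq_sqrt (by positivity)
  have hlogn : Real.log (3/α) ≤ (n:ℝ)/3 := by
    have h4 : Real.log (4 * Real.exp (-(n:ℝ)/3)) < Real.log α :=
      Real.log_lt_log (by positivity) hα.1
    rw [Real.log_mul (by norm_num) (Real.exp_ne_zero _), Real.log_exp] at h4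
    have hld : Real.log (3/α) = Real.log 3 - Real.log α :=
      Real.log_div (by norm_num) (ne_of_gt hα0)
    have hl34 : Real.log 3 ≤ Real.log 4 := by
      apply Real.log_le_log (by norm_num) (by norm_num)
    linarith
  have hτ8 : τ ≤ 8 := by
    have h2 : τ^2 ≤ 16/3 := by
      rw [hτsq, div_le_iff₀ hn0]
      nlinarith
    nlinarith
  set c := 1 + τ with hcdef
  have hc1 : (1:ℝ) ≤ c := by simp [hcdef]; linarith
  have hcpos : (0:ℝ) < c := by linarith
  -- the key analytic bound
  have hntau : (n:ℝ) * τ^2 / 16 = Real.log (3/α) := by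
    rw [hτsq]; field_simp
  have hkey : c^n * Real.exp (-((n:ℝ)*τ)) ≤ α/3 := by
    have ha : c ≤ Real.exp (τ - τ^2/16) := aux_one_add_le_exp hτ0 hτ8
    have hb : c^n ≤ Real.exp (τ - τ^2/16)^n := pow_le_pow_left₀ (by linarith) ha n
    have hcexp : Real.exp (τ - τ^2/16)^n = Real.exp ((n:ℝ)*(τ - τ^2/16)) :=
      (Real.exp_nat_mul _ n).symm
    calc c^n * Real.exp (-((n:ℝ)*τ))
        ≤ Real.exp ((n:ℝ)*(τ - τ^2/16)) * Real.exp (-((n:ℝ)*τ)) := by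
          rw [← hcexp]; exact mul_le_mul_of_nonneg_right hb (Real.exp_nonneg _)
      _ = Real.exp (-((n:ℝ) * τ^2 / 16)) := by
          rw [← Real.exp_add]; ring_nf
      _ = α/3 := by
          rw [hntau, Real.exp_neg, Real.exp_log (by positivity), inv_div]
  -- total mass identity
  have hIexp : Measurable fun x => ENNReal.ofReal (Real.exp (-g x)) :=
    (hgm.neg.exp).ennreal_ofReal
  have hI : ∫⁻ x, ENNReal.ofReal (Real.exp (-g x)) = ENNReal.ofReal Z := by
    have h1 : μ Set.univ = 1 := measure_univ
    rw [hdens, withDensity_apply _ MeasurableSet.univ, Measure.restrict_univ] at h1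
    have hzi : ENNReal.ofReal Z⁻¹ = (ENNReal.ofReal Z)⁻¹ := ENNReal.ofReal_inv_of_pos hZpos
    simp_rw [div_eq_mul_inv, ENNReal.ofReal_mul (Real.exp_nonneg _), hzi] at h1
    rw [lintegral_mul_const _ hIexp] at h1
    have hZ0 : ENNReal.ofReal Z ≠ 0 := by
      simp [ENNReal.ofReal_eq_zero, not_le, hZpos]
    have := congrArg (· * ENNReal.ofReal Z) h1
    simpa [mul_assoc, ENNReal.inv_mul_cancel hZ0 ENNReal.ofReal_ne_top] using this
  -- measurable sets
  have mA : MeasurableSet {x | T < g x} := measurableSet_lt measurable_const hgm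
  have mS : MeasurableSet {x | g x ≤ T} := measurableSet_le hgm measurable_const
  -- the scaled-integral bound
  have hJ : ∫⁻ y, ENNReal.ofReal (Real.exp (-(g xhat) - (g y - g xhat)/c))
      ≤ ENNReal.ofReal (c^n * Z) := by
    set f : (Fin n → ℝ) → ℝ≥0∞ :=
      fun y => ENNReal.ofReal (Real.exp (-(g xhat) - (g y - g xhat)/c)) with hfdef
    have hscale := aux_lintegral_homothety f xhat hcpos
    have hgrow : ∀ x, f (xhat + c • (x - xhat)) ≤ ENNReal.ofReal (Real.exp (-g x)) := by
      intro x
      apply ENNReal.ofReal_le_ofReal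
      apply Real.exp_le_exp.mpr
      have hconv : g x ≤ (1/c) * g (xhat + c • (x - xhat)) + (1 - 1/c) * g xhat := by
        have hpteq : (1/c) • (xhat + c • (x - xhat)) + (1 - 1/c) • xhat = x := by
          ext i
          simp only [Pi.add_apply, Pi.smul_apply, Pi.sub_apply, smul_eq_mul]
          field_simp
          ring
        have hb0 : (0:ℝ) ≤ 1 - 1/c := by
          have : 1/c ≤ 1 := by rw [div_le_one hcpos]; exact hc1
          linarith
        have h2 : g ((1/c) • (xhat + c • (x - xhat)) + (1 - 1/c) • xhat)
            ≤ (1/c) • g (xhat + c • (x - xhat)) + (1 - 1/c) • g xhat :=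
          hg.2 (Set.mem_univ (xhat + c • (x - xhat))) (Set.mem_univ xhat)
            (by positivity) hb0 (by ring)
        rw [hpteq] at h2
        simpa [smul_eq_mul] using h2
      have hmul : c * (g x - g xhat) ≤ g (xhat + c • (x - xhat)) - g xhat := by
        have h3 := mul_le_mul_of_nonneg_left hconv (le_of_lt hcpos)
        have hexpand : c * (1/c * g (xhat + c • (x - xhat)) + (1 - 1/c) * g xhat)
            = g (xhat + c • (x - xhat)) + c * g xhat - g xhat := by
          field_simp
          ring
        rw [hexpand] at h3
        linarith
      have hdiv : g x - g xhat ≤ (g (xhat + c • (x - xhat)) - g xhat)/c := by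
        rw [le_div_iff₀ hcpos]; linarith [hmul]
      linarith
    calc ∫⁻ y, f y
        = ENNReal.ofReal (c^n) * ∫⁻ x, f (xhat + c • (x - xhat)) := by
          rw [hscale, ← mul_assoc, ← ENNReal.ofReal_mul (by positivity),
            mul_inv_cancel₀ (by positivity), ENNReal.ofReal_one, one_mul]
      _ ≤ ENNReal.ofReal (c^n) * ∫⁻ x, ENNReal.ofReal (Real.exp (-g x)) :=
          mul_le_mul_right (lintegral_mono hgrow) _
      _ = ENNReal.ofReal (c^n) * ENNReal.ofReal Z := by rw [hI]
      _ = ENNReal.ofReal (c^n * Z) := (ENNReal.ofReal_mul (by positivity)).symm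
  -- pointwise bound on the tail set
  have hpt : ∀ y, T < g y → Real.exp (-g y) / Z ≤
      Real.exp (-((n:ℝ)*τ)) * Real.exp (-(g xhat) - (g y - g xhat)/c) / Z := by
    intro y hy
    have hh : (n:ℝ)*(τ+1) < g y - g xhat := by
      rw [hTdef] at hy; linarith
    have hexp : Real.exp (-g y) ≤
        Real.exp (-((n:ℝ)*τ)) * Real.exp (-(g xhat) - (g y - g xhat)/c) := by
      rw [← Real.exp_add]
      apply Real.exp_le_exp.mpr
      have e1 : (g y - g xhat) - (g y - g xhat)/c = (g y - g xhat) * (τ/c) := by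
        field_simp
        ring
      have e2 : (n:ℝ)*τ = ((n:ℝ)*(τ+1)) * (τ/c) := by
        rw [hcdef]; field_simp; ring
      have key : (n:ℝ)*τ ≤ (g y - g xhat) - (g y - g xhat)/c := by
        rw [e1, e2]
        exact mul_le_mul_of_nonneg_right (le_of_lt hh) (by positivity)
      linarith
    gcongr
  -- bound on the tail measure
  have hFm : Measurable fun y => ENNReal.ofReal
      (Real.exp (-((n:ℝ)*τ)) * Real.exp (-(g xhat) - (g y - g xhat)/c) / Z) := by
    apply Measurable.ennreal_ofReal
    exact (measurable_const.mul
      ((measurable_const.sub ((hgm.sub measurable_const).div_const c)).exp)).div_const Z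
  have hμA : μ {x | T < g x} ≤ ENNReal.ofReal (α/3) := by
    rw [hdens, withDensity_apply _ mA]
    calc ∫⁻ y in {x | T < g x}, ENNReal.ofReal (Real.exp (-g y) / Z) ∂volume
        ≤ ∫⁻ y in {x | T < g x}, ENNReal.ofReal
            (Real.exp (-((n:ℝ)*τ)) * Real.exp (-(g xhat) - (g y - g xhat)/c) / Z) ∂volume :=
          setLIntegral_mono hFm (fun y hy => ENNReal.ofReal_le_ofReal (hpt y hy))
      _ ≤ ∫⁻ y, ENNReal.ofReal
            (Real.exp (-((n:ℝ)*τ)) * Real.exp (-(g xhat) - (g y - g xhat)/c) / Z) :=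
          setLIntegral_le_lintegral _ _
      _ = ENNReal.ofReal (Real.exp (-((n:ℝ)*τ)) / Z) *
            ∫⁻ y, ENNReal.ofReal (Real.exp (-(g xhat) - (g y - g xhat)/c)) := by
          have hsplit : ∀ y : Fin n → ℝ, ENNReal.ofReal
              (Real.exp (-((n:ℝ)*τ)) * Real.exp (-(g xhat) - (g y - g xhat)/c) / Z)
              = ENNReal.ofReal (Real.exp (-((n:ℝ)*τ)) / Z) *
                ENNReal.ofReal (Real.exp (-(g xhat) - (g y - g xhat)/c)) := by
            intro y
            rw [← ENNReal.ofReal_mul (by positivity)]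
            congr 1
            ring
          simp_rw [hsplit]
          exact lintegral_const_mul' _ _ ENNReal.ofReal_ne_top
      _ ≤ ENNReal.ofReal (Real.exp (-((n:ℝ)*τ)) / Z) * ENNReal.ofReal (c^n * Z) :=
          mul_le_mul_right hJ _
      _ = ENNReal.ofReal (c^n * Real.exp (-((n:ℝ)*τ))) := by
          rw [← ENNReal.ofReal_mul (by positivity)]
          congr 1
          field_simp
      _ ≤ ENNReal.ofReal (α/3) := ENNReal.ofReal_le_ofReal hkey
  -- part 1
  have hcompl : {x | g x ≤ T} = {x | T < g x}ᶜ := by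
    ext x; simp [not_lt]
  have hμS : μ {x | g x ≤ T} = 1 - μ {x | T < g x} := by
    rw [hcompl]; exact prob_compl_eq_one_sub mA
  have hμAα : (μ {x | T < g x}).toReal ≤ α/3 :=
    ENNReal.toReal_le_of_le_ofReal (by positivity) hμA
  have hμA1 : μ {x | T < g x} ≤ 1 := prob_le_one
  have part1 : (μ {x | g x ≤ T}).toReal ≥ 1 - α := by
    rw [hμS, ENNReal.toReal_sub_of_le hμA1 ENNReal.one_ne_top, ENNReal.toReal_one]
    linarith
  -- part 2
  have hgc : Continuous g := by
    rw [← continuousOn_univ]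
    exact hg.continuousOn isOpen_univ
  refine ⟨part1, fun x₀ hx₀ => ?_⟩
  simp only [Set.mem_setOf_eq] at hx₀ ⊢
  by_contra hcon
  push_neg at hcon
  have hTγ : T < γα := lt_of_lt_of_le hcon hx₀
  set w := (T + g x₀)/2 with hwdef
  have hGcont : Continuous (fun t : ℝ => g (xhat + t • (x₀ - xhat))) :=
    hgc.comp (continuous_const.add (continuous_id.smul continuous_const))
  have hgxhatT : g xhat ≤ T := by
    have h0 : (0:ℝ) ≤ (n:ℝ)*(τ+1) := by positivity
    rw [hTdef]; linarith
  have heq1 : xhat + (x₀ - xhat) = x₀ := by abel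
  have hmem : w ∈ Set.Icc ((fun t : ℝ => g (xhat + t • (x₀ - xhat))) 0)
      ((fun t : ℝ => g (xhat + t • (x₀ - xhat))) 1) := by
    simp only [zero_smul, add_zero, one_smul, heq1]
    constructor
    · linarith
    · linarith
  obtain ⟨t, ht01, hty⟩ := intermediate_value_Icc (by norm_num : (0:ℝ) ≤ 1)
    hGcont.continuousOn hmem
  set y := xhat + t • (x₀ - xhat) with hydef
  have hgy : g y = w := hty
  have hyU : y ∈ g ⁻¹' (Set.Ioo T γα) := by
    simp only [Set.mem_preimage, Set.mem_Ioo, hgy]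
    constructor
    · rw [hwdef]; linarith
    · rw [hwdef]; linarith
  have hUopen : IsOpen (g ⁻¹' (Set.Ioo T γα)) := isOpen_Ioo.preimage hgc
  have hvol : 0 < volume (g ⁻¹' (Set.Ioo T γα)) := hUopen.measure_pos volume ⟨y, hyU⟩
  have hμU : 0 < μ (g ⁻¹' (Set.Ioo T γα)) := by
    rw [hdens, withDensity_apply _ hUopen.measurableSet]
    have hlb : ENNReal.ofReal (Real.exp (-γα)/Z) * volume (g ⁻¹' (Set.Ioo T γα))
        ≤ ∫⁻ x in g ⁻¹' (Set.Ioo T γα), ENNReal.ofReal (Real.exp (-g x)/Z) ∂volume := by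
      rw [← setLIntegral_const]
      apply setLIntegral_mono ((hgm.neg.exp.div_const Z).ennreal_ofReal)
      intro x hx
      apply ENNReal.ofReal_le_ofReal
      have hxg : g x < γα := hx.2
      have hee : Real.exp (-γα) ≤ Real.exp (-g x) := Real.exp_le_exp.mpr (by linarith)
      gcongr
      exact neg_le_neg hxg.le
    refine lt_of_lt_of_le ?_ hlb
    apply ENNReal.mul_pos
    · simp only [ne_eq, ENNReal.ofReal_eq_zero, not_le]
      positivity
    · exact ne_of_gt hvol
  have hsub : {x | g x ≤ T} ⊆ {x | g x ≤ γα} := fun x hx => le_trans hx (le_of_lt hTγ)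
  have hle : μ {x | g x ≤ γα} ≤ μ {x | g x ≤ T} :=
    (ENNReal.toReal_le_toReal (measure_ne_top μ _) (measure_ne_top μ _)).mp
      (by rw [hγα]; exact part1)
  have hD0 : μ ({x | g x ≤ γα} \ {x | g x ≤ T}) = 0 := by
    rw [measure_diff hsub mS.nullMeasurableSet (measure_ne_top μ _), tsub_eq_zero_iff_le]
    exact hle
  have hUD : g ⁻¹' (Set.Ioo T γα) ⊆ {x | g x ≤ γα} \ {x | g x ≤ T} := by
    intro x hx
    exact ⟨le_of_lt hx.2, not_le.mpr hx.1⟩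
  exact absurd (measure_mono_null hUD hD0) (ne_of_gt hμU)
end

section
/- Marginals of log-concave densities are log-concave: if p(x̄, x̲) is a log-concave probability density on ℝᵐ × ℝ^{n−m}, then the marginal density p̄(x̄) = ∫ p(x̄, x̲) dx̲ is log-concave on ℝᵐ. -/
open MeasureTheory Real

open Set Pointwise ENNReal

/-- One-dimensional Brunn–Minkowski for nonempty compact sets. -/
lemma compact_add_meas (K L : Set ℝ) (hK : IsCompact K) (hL : IsCompact L)
    (hKne : K.Nonempty) (hLne : L.Nonempty) :
    volume K + volume L ≤ volume (K + L) := by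
  set a := sSup K with ha
  set b := sInf L with hb
  have haK : a ∈ K := hK.sSup_mem hKne
  have hbL : b ∈ L := hL.sInf_mem hLne
  set K' : Set ℝ := (fun x => x + b) '' K with hK'
  set L' : Set ℝ := (fun y => a + y) '' L with hL'
  have hK'sub : K' ⊆ K + L := by
    rintro _ ⟨x, hx, rfl⟩; exact Set.add_mem_add hx hbL
  have hL'sub : L' ⊆ K + L := by
    rintro _ ⟨y, hy, rfl⟩; exact Set.add_mem_add haK hy
  have hK'vol : volume K' = volume K := by
    rw [hK', Set.image_add_right]; exact measure_preimage_add_right volume (-b) K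
  have hL'vol : volume L' = volume L := by
    rw [hL', Set.image_add_left]; exact measure_preimage_add volume (-a) L
  have hL'meas : MeasurableSet L' :=
    ((Homeomorph.addLeft a).isCompact_image.2 hL).isClosed.measurableSet
  have hdisj : Disjoint (K' \ {a + b}) L' := by
    rw [Set.disjoint_left]
    rintro _ ⟨⟨x, hx, rfl⟩, hne⟩ ⟨y, hy, hxy⟩
    simp only at hxy
    have h1 : x ≤ a := le_csSup hK.bddAbove hx
    have h2 : b ≤ y := csInf_le hL.bddBelow hy
    apply hne
    have hx' : x = a := by linarith
    simp [hx']
  calc volume K + volume L = volume (K' \ {a + b}) + volume L' := by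
        rw [hL'vol, measure_diff_null (measure_singleton _), hK'vol]
      _ = volume ((K' \ {a + b}) ∪ L') := (measure_union hdisj hL'meas).symm
      _ ≤ volume (K + L) := measure_mono (Set.union_subset (fun z hz => hK'sub hz.1) hL'sub)

lemma meas_add_meas (A B : Set ℝ) (hA : MeasurableSet A) (hB : MeasurableSet B)
    (hAne : A.Nonempty) (hBne : B.Nonempty) :
    volume A + volume B ≤ volume (A + B) := by
  obtain ⟨a0, ha0⟩ := hAne
  obtain ⟨b0, hb0⟩ := hBne
  -- infinite cases
  rcases eq_or_ne (volume A) ⊤ with hAinf | hAfin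
  · have : volume (A + B) = ⊤ := by
      refine top_le_iff.mp ?_
      calc (⊤ : ℝ≥0∞) = volume ((fun x => x + b0) '' A) := by
            rw [Set.image_add_right, measure_preimage_add_right volume (-b0) A, hAinf]
        _ ≤ volume (A + B) := measure_mono (by rintro _ ⟨x, hx, rfl⟩; exact Set.add_mem_add hx hb0)
    simp [this]
  rcases eq_or_ne (volume B) ⊤ with hBinf | hBfin
  · have : volume (A + B) = ⊤ := by
      refine top_le_iff.mp ?_
      calc (⊤ : ℝ≥0∞) = volume ((fun y => a0 + y) '' B) := by
            rw [Set.image_add_left, measure_preimage_add volume (-a0) B, hBinf]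
        _ ≤ volume (A + B) := measure_mono (by rintro _ ⟨y, hy, rfl⟩; exact Set.add_mem_add ha0 hy)
    simp [this]
  refine ENNReal.le_of_forall_pos_le_add fun ε hε _ => ?_
  have hε2 : ((ε : ℝ≥0∞) / 2) ≠ 0 := by
    simp [ENNReal.div_eq_zero_iff, (by exact_mod_cast hε.ne' : (ε:ℝ≥0∞) ≠ 0)]
  obtain ⟨KA, hKAsub, hKAc, hKAv⟩ := hA.exists_isCompact_lt_add hAfin hε2
  obtain ⟨KB, hKBsub, hKBc, hKBv⟩ := hB.exists_isCompact_lt_add hBfin hε2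
  set KA' := KA ∪ {a0} with hKA'
  set KB' := KB ∪ {b0} with hKB'
  have hKA'c : IsCompact KA' := hKAc.union isCompact_singleton
  have hKB'c : IsCompact KB' := hKBc.union isCompact_singleton
  have hKA'sub : KA' ⊆ A := Set.union_subset hKAsub (by simp [ha0])
  have hKB'sub : KB' ⊆ B := Set.union_subset hKBsub (by simp [hb0])
  have key := compact_add_meas KA' KB' hKA'c hKB'c ⟨a0, by simp [hKA']⟩ ⟨b0, by simp [hKB']⟩
  have hsub : KA' + KB' ⊆ A + B := Set.add_subset_add hKA'sub hKB'sub
  have h1 : volume A ≤ volume KA' + ε/2 :=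
    le_trans hKAv.le (add_le_add_left (measure_mono Set.subset_union_left) _)
  have h2 : volume B ≤ volume KB' + ε/2 :=
    le_trans hKBv.le (add_le_add_left (measure_mono Set.subset_union_left) _)
  calc volume A + volume B ≤ (volume KA' + volume KB') + (↑ε/2 + ↑ε/2) := by
        calc volume A + volume B ≤ (volume KA' + ↑ε/2) + (volume KB' + ↑ε/2) := add_le_add h1 h2
          _ = (volume KA' + volume KB') + (↑ε/2 + ↑ε/2) := by ring
    _ ≤ volume (A + B) + ↑ε := by
        rw [ENNReal.add_halves]
        exact add_le_add_left (key.trans (measure_mono hsub)) _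

lemma ennreal_amgm (a b : ℝ≥0∞) (t : ℝ) (ht : t ∈ Set.Ioo (0:ℝ) 1) :
    a ^ (1-t) * b ^ t ≤ ENNReal.ofReal (1-t) * a + ENNReal.ofReal t * b := by
  obtain ⟨ht0, ht1⟩ := ht
  have h1t : (0:ℝ) < 1 - t := by linarith
  rcases eq_or_ne a ⊤ with rfl | ha
  · have : ENNReal.ofReal (1-t) * ⊤ = ⊤ :=
      ENNReal.mul_top (by simp [ENNReal.ofReal_eq_zero]; linarith)
    rw [this]; simp
  rcases eq_or_ne b ⊤ with rfl | hb
  · have : ENNReal.ofReal t * ⊤ = ⊤ :=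
      ENNReal.mul_top (by simp [ENNReal.ofReal_eq_zero]; linarith)
    rw [this]; simp
  have ha' : a = ENNReal.ofReal a.toReal := (ENNReal.ofReal_toReal ha).symm
  have hb' : b = ENNReal.ofReal b.toReal := (ENNReal.ofReal_toReal hb).symm
  rw [ha', hb']
  rw [ENNReal.ofReal_rpow_of_nonneg ENNReal.toReal_nonneg h1t.le,
    ENNReal.ofReal_rpow_of_nonneg ENNReal.toReal_nonneg ht0.le,
    ← ENNReal.ofReal_mul (Real.rpow_nonneg ENNReal.toReal_nonneg _),
    ← ENNReal.ofReal_mul h1t.le, ← ENNReal.ofReal_mul ht0.le,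
    ← ENNReal.ofReal_add (by positivity) (by positivity)]
  exact ENNReal.ofReal_le_ofReal
    (Real.geom_mean_le_arith_mean2_weighted h1t.le ht0.le ENNReal.toReal_nonneg
      ENNReal.toReal_nonneg (by ring))

lemma ennreal_isup_rpow (u : ℕ → ℝ≥0∞) (p : ℝ) (hp : 0 < p) :
    (⨆ n, u n) ^ p = ⨆ n, (u n) ^ p := by
  apply le_antisymm
  · have : ⨆ n, u n ≤ (⨆ n, (u n) ^ p) ^ p⁻¹ := by
      refine iSup_le fun n => ?_
      have : (u n) ^ p ≤ ⨆ n, (u n) ^ p := le_iSup (fun n => (u n) ^ p) n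
      calc u n = ((u n) ^ p) ^ p⁻¹ := by
            rw [← ENNReal.rpow_mul, mul_inv_cancel₀ hp.ne', ENNReal.rpow_one]
        _ ≤ (⨆ n, (u n) ^ p) ^ p⁻¹ := ENNReal.rpow_le_rpow this (by positivity)
    calc (⨆ n, u n) ^ p ≤ ((⨆ n, (u n) ^ p) ^ p⁻¹) ^ p := ENNReal.rpow_le_rpow this hp.le
      _ = ⨆ n, (u n) ^ p := by rw [← ENNReal.rpow_mul, inv_mul_cancel₀ hp.ne', ENNReal.rpow_one]
  · exact iSup_le fun n => ENNReal.rpow_le_rpow (le_iSup _ n) hp.le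

lemma isup_min_nat (c : ℝ≥0∞) : ⨆ n : ℕ, min c (n : ℝ≥0∞) = c := by
  apply le_antisymm (iSup_le fun n => min_le_left _ _)
  rcases eq_or_ne c ⊤ with rfl | hc
  · simpa using ENNReal.iSup_natCast
  · obtain ⟨n, hn⟩ := ENNReal.exists_nat_gt hc
    calc c = min c n := (min_eq_left hn.le).symm
      _ ≤ ⨆ n : ℕ, min c (n : ℝ≥0∞) := le_iSup (fun n : ℕ => min c (n:ℝ≥0∞)) n

lemma one_dim_PL_real (f g h : ℝ → ℝ) (c : ℝ)
    (hf : Measurable f) (hg : Measurable g) (hh : Measurable h)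
    (hf0 : ∀ x, 0 ≤ f x) (hg0 : ∀ x, 0 ≤ g x) (hh0 : ∀ x, 0 ≤ h x)
    (hfc : ∀ x, f x ≤ c) (hgc : ∀ x, g x ≤ c)
    (t : ℝ) (ht : t ∈ Set.Ioo (0:ℝ) 1)
    (hyp : ∀ x y : ℝ, f x ^ (1-t) * g y ^ t ≤ h ((1-t)*x + t*y)) :
    (∫⁻ x, ENNReal.ofReal (f x)) ^ (1-t) * (∫⁻ x, ENNReal.ofReal (g x)) ^ t
      ≤ ∫⁻ x, ENNReal.ofReal (h x) := by
  obtain ⟨ht0, ht1⟩ := ht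
  have h1t : (0:ℝ) < 1 - t := by linarith
  set A := ∫⁻ x, ENNReal.ofReal (f x) with hA
  set B := ∫⁻ x, ENNReal.ofReal (g x) with hB
  rcases eq_or_ne A 0 with hA0 | hAne
  · rw [hA0, ENNReal.zero_rpow_of_pos h1t, zero_mul]; exact zero_le
  rcases eq_or_ne B 0 with hB0 | hBne
  · rw [hB0, ENNReal.zero_rpow_of_pos ht0, mul_zero]; exact zero_le
  -- positivity points
  have hfex : ∃ x, 0 < f x := by
    by_contra hcon
    push_neg at hcon
    apply hAne
    rw [hA]
    simp only [lintegral_eq_zero_iff (hf.ennreal_ofReal)]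
    exact Filter.Eventually.of_forall fun x =>
      by simp [ENNReal.ofReal_eq_zero.2 (hcon x)]
  have hgex : ∃ x, 0 < g x := by
    by_contra hcon
    push_neg at hcon
    apply hBne
    rw [hB]
    simp only [lintegral_eq_zero_iff (hg.ennreal_ofReal)]
    exact Filter.Eventually.of_forall fun x =>
      by simp [ENNReal.ofReal_eq_zero.2 (hcon x)]
  have hbddf : BddAbove (Set.range f) := ⟨c, by rintro _ ⟨x, rfl⟩; exact hfc x⟩
  have hbddg : BddAbove (Set.range g) := ⟨c, by rintro _ ⟨x, rfl⟩; exact hgc x⟩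
  set Mf := ⨆ x, f x with hMf
  set Mg := ⨆ x, g x with hMg
  obtain ⟨x₀, hx₀⟩ := hfex
  obtain ⟨y₀, hy₀⟩ := hgex
  have hMf0 : 0 < Mf := lt_of_lt_of_le hx₀ (le_ciSup hbddf x₀)
  have hMg0 : 0 < Mg := lt_of_lt_of_le hy₀ (le_ciSup hbddg y₀)
  set C : ℝ := Mf ^ (1-t) * Mg ^ t with hC
  have hC0 : 0 < C := by positivity
  set F := fun x => f x / Mf with hF
  set G := fun x => g x / Mg with hG
  set H := fun x => h x / C with hH
  have hFm : Measurable F := hf.div_const _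
  have hGm : Measurable G := hg.div_const _
  have hHm : Measurable H := hh.div_const _
  have hF0 : ∀ x, 0 ≤ F x := fun x => div_nonneg (hf0 x) hMf0.le
  have hG0 : ∀ x, 0 ≤ G x := fun x => div_nonneg (hg0 x) hMg0.le
  have hH0 : ∀ x, 0 ≤ H x := fun x => div_nonneg (hh0 x) hC0.le
  have hF1 : ∀ x, F x ≤ 1 := fun x => by
    rw [hF, div_le_one hMf0]; exact le_ciSup hbddf x
  have hG1 : ∀ x, G x ≤ 1 := fun x => by
    rw [hG, div_le_one hMg0]; exact le_ciSup hbddg x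
  have hyp' : ∀ x y : ℝ, F x ^ (1-t) * G y ^ t ≤ H ((1-t)*x + t*y) := by
    intro x y
    rw [hF, hG, hH]
    simp only
    rw [Real.div_rpow (hf0 x) hMf0.le, Real.div_rpow (hg0 y) hMg0.le,
      div_mul_div_comm, hC]
    exact div_le_div_of_nonneg_right (hyp x y) (le_of_lt hC0)
  -- level set inclusion and measure bound
  have level : ∀ s : ℝ, s ∈ Set.Ioo (0:ℝ) 1 →
      ENNReal.ofReal (1-t) * volume {x | s < F x} + ENNReal.ofReal t * volume {x | s < G x}
        ≤ volume {x | s < H x} := by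
    intro s ⟨hs0, hs1⟩
    set As := {x | s < F x} with hAs
    set Bs := {x | s < G x} with hBs
    have hAsm : MeasurableSet As := measurableSet_lt measurable_const hFm
    have hBsm : MeasurableSet Bs := measurableSet_lt measurable_const hGm
    have hAsne : As.Nonempty := by
      have : s * Mf < Mf := by nlinarith
      obtain ⟨x, hx⟩ := exists_lt_of_lt_ciSup (lt_of_le_of_lt (le_refl _) this : s * Mf < ⨆ x, f x)
      exact ⟨x, by rw [hAs]; simp only [Set.mem_setOf_eq, hF]; rw [lt_div_iff₀ hMf0]; exact hx⟩
    have hBsne : Bs.Nonempty := by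
      have : s * Mg < Mg := by nlinarith
      obtain ⟨y, hy⟩ := exists_lt_of_lt_ciSup (lt_of_le_of_lt (le_refl _) this : s * Mg < ⨆ x, g x)
      exact ⟨y, by rw [hBs]; simp only [Set.mem_setOf_eq, hG]; rw [lt_div_iff₀ hMg0]; exact hy⟩
    have hsub : (1-t) • As + t • Bs ⊆ {x | s < H x} := by
      rintro _ ⟨_, ⟨x, hx, rfl⟩, _, ⟨y, hy, rfl⟩, rfl⟩
      simp only [smul_eq_mul, Set.mem_setOf_eq]
      refine lt_of_lt_of_le ?_ (hyp' x y)
      have h1 : s ^ (1-t) < F x ^ (1-t) :=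
        Real.rpow_lt_rpow hs0.le hx (by linarith)
      have h2 : s ^ t < G y ^ t := Real.rpow_lt_rpow hs0.le hy ht0
      have := mul_lt_mul'' h1 h2 (Real.rpow_nonneg hs0.le _) (Real.rpow_nonneg hs0.le _)
      rwa [← Real.rpow_add hs0, sub_add_cancel, Real.rpow_one] at this
    have hsmulA : volume ((1-t) • As) = ENNReal.ofReal (1-t) * volume As := by
      rw [Measure.addHaar_smul]
      congr 1
      rw [Module.finrank_self, pow_one, abs_of_pos h1t]
    have hsmulB : volume (t • Bs) = ENNReal.ofReal t * volume Bs := by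
      rw [Measure.addHaar_smul]
      congr 1
      rw [Module.finrank_self, pow_one, abs_of_pos ht0]
    calc ENNReal.ofReal (1-t) * volume As + ENNReal.ofReal t * volume Bs
        = volume ((1-t) • As) + volume (t • Bs) := by rw [hsmulA, hsmulB]
      _ ≤ volume ((1-t) • As + t • Bs) :=
          meas_add_meas _ _ (hAsm.const_smul₀ (1-t))
            (hBsm.const_smul₀ t) (hAsne.smul_set) (hBsne.smul_set)
      _ ≤ volume {x | s < H x} := measure_mono hsub
  -- layer cake
  have layerF : ∫⁻ x, ENNReal.ofReal (F x) = ∫⁻ s in Set.Ioo (0:ℝ) 1, volume {x | s < F x} := by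
    rw [lintegral_eq_lintegral_meas_lt volume (Filter.Eventually.of_forall hF0) hFm.aemeasurable]
    have hsplit : Set.Ioi (0:ℝ) = Set.Ioo (0:ℝ) 1 ∪ Set.Ici (1:ℝ) := by
      ext x; simp only [Set.mem_Ioi, Set.mem_union, Set.mem_Ioo, Set.mem_Ici]
      constructor
      · intro hx; rcases lt_or_ge x 1 with h | h
        · exact Or.inl ⟨hx, h⟩
        · exact Or.inr h
      · rintro (⟨h, _⟩ | h) <;> linarith
    rw [hsplit, lintegral_union measurableSet_Ici (by
      rw [Set.disjoint_left]; rintro x ⟨_, hx1⟩ hx2; simp at hx2; linarith)]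
    have hzero : ∫⁻ s in Set.Ici (1:ℝ), volume {x | s < F x} = 0 := by
      have heq : ∀ s ∈ Set.Ici (1:ℝ), volume {x | s < F x} = (0:ℝ≥0∞) := by
        intro s hs
        have : {x | s < F x} = ∅ := by
          ext x; simp only [Set.mem_setOf_eq, Set.mem_empty_iff_false, iff_false, not_lt]
          exact (hF1 x).trans hs
        simp [this]
      rw [setLIntegral_congr_fun measurableSet_Ici heq]
      simp
    rw [hzero, add_zero]
  have layerG : ∫⁻ x, ENNReal.ofReal (G x) = ∫⁻ s in Set.Ioo (0:ℝ) 1, volume {x | s < G x} := by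
    rw [lintegral_eq_lintegral_meas_lt volume (Filter.Eventually.of_forall hG0) hGm.aemeasurable]
    have hsplit : Set.Ioi (0:ℝ) = Set.Ioo (0:ℝ) 1 ∪ Set.Ici (1:ℝ) := by
      ext x; simp only [Set.mem_Ioi, Set.mem_union, Set.mem_Ioo, Set.mem_Ici]
      constructor
      · intro hx; rcases lt_or_ge x 1 with h | h
        · exact Or.inl ⟨hx, h⟩
        · exact Or.inr h
      · rintro (⟨h, _⟩ | h) <;> linarith
    rw [hsplit, lintegral_union measurableSet_Ici (by
      rw [Set.disjoint_left]; rintro x ⟨_, hx1⟩ hx2; simp at hx2; linarith)]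
    have hzero : ∫⁻ s in Set.Ici (1:ℝ), volume {x | s < G x} = 0 := by
      have heq : ∀ s ∈ Set.Ici (1:ℝ), volume {x | s < G x} = (0:ℝ≥0∞) := by
        intro s hs
        have : {x | s < G x} = ∅ := by
          ext x; simp only [Set.mem_setOf_eq, Set.mem_empty_iff_false, iff_false, not_lt]
          exact (hG1 x).trans hs
        simp [this]
      rw [setLIntegral_congr_fun measurableSet_Ici heq]
      simp
    rw [hzero, add_zero]
  -- antitone measurability of level-measure functions
  have hantiF : Measurable fun s : ℝ => volume {x | s < F x} := by
    apply Antitone.measurable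
    intro s₁ s₂ hs
    exact measure_mono fun x hx => lt_of_le_of_lt hs hx
  have hantiG : Measurable fun s : ℝ => volume {x | s < G x} := by
    apply Antitone.measurable
    intro s₁ s₂ hs
    exact measure_mono fun x hx => lt_of_le_of_lt hs hx
  -- main chain for normalized functions
  have main : (∫⁻ x, ENNReal.ofReal (F x)) ^ (1-t) * (∫⁻ x, ENNReal.ofReal (G x)) ^ t
      ≤ ∫⁻ x, ENNReal.ofReal (H x) := by
    refine le_trans (ennreal_amgm _ _ t ⟨ht0, ht1⟩) ?_
    rw [layerF, layerG]
    calc ENNReal.ofReal (1-t) * (∫⁻ s in Set.Ioo (0:ℝ) 1, volume {x | s < F x})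
          + ENNReal.ofReal t * (∫⁻ s in Set.Ioo (0:ℝ) 1, volume {x | s < G x})
        = ∫⁻ s in Set.Ioo (0:ℝ) 1,
            (ENNReal.ofReal (1-t) * volume {x | s < F x}
              + ENNReal.ofReal t * volume {x | s < G x}) := by
          rw [lintegral_add_left (hantiF.const_mul _),
            lintegral_const_mul _ hantiF, lintegral_const_mul _ hantiG]
      _ ≤ ∫⁻ s in Set.Ioo (0:ℝ) 1, volume {x | s < H x} := by
          apply setLIntegral_mono' measurableSet_Ioo
          intro s hs
          exact level s hs
      _ ≤ ∫⁻ s in Set.Ioi (0:ℝ), volume {x | s < H x} := by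
          apply lintegral_mono_set
          intro s hs
          exact hs.1
      _ = ∫⁻ x, ENNReal.ofReal (H x) :=
          (lintegral_eq_lintegral_meas_lt volume
            (Filter.Eventually.of_forall hH0) hHm.aemeasurable).symm
  -- unnormalize
  have hFint : ∫⁻ x, ENNReal.ofReal (F x) = A * (ENNReal.ofReal Mf)⁻¹ := by
    rw [hA]
    rw [← lintegral_mul_const _ hf.ennreal_ofReal]
    congr 1 with x
    rw [hF]
    simp only
    rw [div_eq_mul_inv, ENNReal.ofReal_mul (hf0 x), ENNReal.ofReal_inv_of_pos hMf0]
  have hGint : ∫⁻ x, ENNReal.ofReal (G x) = B * (ENNReal.ofReal Mg)⁻¹ := by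
    rw [hB]
    rw [← lintegral_mul_const _ hg.ennreal_ofReal]
    congr 1 with x
    rw [hG]
    simp only
    rw [div_eq_mul_inv, ENNReal.ofReal_mul (hg0 x), ENNReal.ofReal_inv_of_pos hMg0]
  have hHint : ∫⁻ x, ENNReal.ofReal (H x) = (∫⁻ x, ENNReal.ofReal (h x)) * (ENNReal.ofReal C)⁻¹ := by
    rw [← lintegral_mul_const _ hh.ennreal_ofReal]
    congr 1 with x
    rw [hH]
    simp only
    rw [div_eq_mul_inv, ENNReal.ofReal_mul (hh0 x), ENNReal.ofReal_inv_of_pos hC0]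
  rw [hFint, hGint, hHint] at main
  have hCeq : ENNReal.ofReal C = (ENNReal.ofReal Mf) ^ (1-t) * (ENNReal.ofReal Mg) ^ t := by
    rw [hC, ENNReal.ofReal_mul (Real.rpow_nonneg hMf0.le _),
      ENNReal.ofReal_rpow_of_pos hMf0, ENNReal.ofReal_rpow_of_pos hMg0]
  rw [ENNReal.mul_rpow_of_nonneg _ _ h1t.le, ENNReal.mul_rpow_of_nonneg _ _ ht0.le] at main
  rw [ENNReal.inv_rpow, ENNReal.inv_rpow] at main
  have hrearr : A ^ (1-t) * ((ENNReal.ofReal Mf) ^ (1-t))⁻¹ * (B ^ t * ((ENNReal.ofReal Mg) ^ t)⁻¹)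
      = A ^ (1-t) * B ^ t * (ENNReal.ofReal C)⁻¹ := by
    rw [hCeq, ENNReal.mul_inv (Or.inl (by
        simp only [Ne, ENNReal.rpow_eq_zero_iff, not_or, not_and_or]
        constructor
        · exact Or.inl (by simp [ENNReal.ofReal_eq_zero, not_le, hMf0])
        · exact Or.inl ENNReal.ofReal_ne_top))
      (Or.inl (ENNReal.rpow_ne_top_of_nonneg h1t.le ENNReal.ofReal_ne_top))]
    ring
  rw [hrearr] at main
  have hCne0 : ENNReal.ofReal C ≠ 0 := by simp [ENNReal.ofReal_eq_zero, not_le, hC0]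
  have hCnetop : ENNReal.ofReal C ≠ ⊤ := ENNReal.ofReal_ne_top
  have hCinv0 : (ENNReal.ofReal C)⁻¹ ≠ 0 := ENNReal.inv_ne_zero.2 hCnetop
  have hCinvtop : (ENNReal.ofReal C)⁻¹ ≠ ⊤ := ENNReal.inv_ne_top.2 hCne0
  exact (ENNReal.mul_le_mul_iff_left hCinv0 hCinvtop).1 main

lemma isup_min_nat' (c : ℝ≥0∞) : ⨆ n : ℕ, min c ((n : ℝ≥0∞) + 1) = c := by
  apply le_antisymm (iSup_le fun n => min_le_left _ _)
  conv_lhs => rw [← isup_min_nat c]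
  exact iSup_le fun n => le_iSup_of_le n
    (le_min (min_le_left _ _) ((min_le_right _ _).trans le_self_add))

lemma one_dim_PL (f g h : ℝ → ℝ≥0∞)
    (hf : Measurable f) (hg : Measurable g) (hh : Measurable h)
    (t : ℝ) (ht : t ∈ Set.Ioo (0:ℝ) 1)
    (hyp : ∀ x y : ℝ, f x ^ (1-t) * g y ^ t ≤ h ((1-t)*x + t*y)) :
    (∫⁻ x, f x) ^ (1-t) * (∫⁻ x, g x) ^ t ≤ ∫⁻ x, h x := by
  obtain ⟨ht0, ht1⟩ := ht
  have h1t : (0:ℝ) < 1 - t := by linarith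
  set cn : ℕ → ℝ≥0∞ := fun n => (n : ℝ≥0∞) + 1 with hcn
  have hcn_ne_top : ∀ n, cn n ≠ ⊤ := fun n => by
    simp [hcn, ENNReal.add_ne_top, ENNReal.natCast_ne_top]
  have hcn_ne_zero : ∀ n, cn n ≠ 0 := fun n => by simp [hcn]
  -- truncated ENNReal hypothesis
  have hyp_trunc : ∀ n, ∀ x y : ℝ,
      min (f x) (cn n) ^ (1-t) * min (g y) (cn n) ^ t ≤ min (h ((1-t)*x + t*y)) (cn n) := by
    intro n x y
    refine le_min ?_ ?_
    · refine le_trans ?_ (hyp x y)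
      exact mul_le_mul' (ENNReal.rpow_le_rpow (min_le_left _ _) h1t.le)
        (ENNReal.rpow_le_rpow (min_le_left _ _) ht0.le)
    · calc min (f x) (cn n) ^ (1-t) * min (g y) (cn n) ^ t
          ≤ (cn n) ^ (1-t) * (cn n) ^ t :=
            mul_le_mul' (ENNReal.rpow_le_rpow (min_le_right _ _) h1t.le)
              (ENNReal.rpow_le_rpow (min_le_right _ _) ht0.le)
        _ = cn n := by
            rw [← ENNReal.rpow_add _ _ (hcn_ne_zero n) (hcn_ne_top n), sub_add_cancel,
              ENNReal.rpow_one]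
  -- real truncations
  set Fn : ℕ → ℝ → ℝ := fun n x => (min (f x) (cn n)).toReal with hFn
  set Gn : ℕ → ℝ → ℝ := fun n x => (min (g x) (cn n)).toReal with hGn
  set Hn : ℕ → ℝ → ℝ := fun n x => (min (h x) (cn n)).toReal with hHn
  have hofFn : ∀ n x, ENNReal.ofReal (Fn n x) = min (f x) (cn n) := fun n x =>
    ENNReal.ofReal_toReal (ne_top_of_le_ne_top (hcn_ne_top n) (min_le_right _ _))
  have hofGn : ∀ n x, ENNReal.ofReal (Gn n x) = min (g x) (cn n) := fun n x =>
    ENNReal.ofReal_toReal (ne_top_of_le_ne_top (hcn_ne_top n) (min_le_right _ _))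
  have hofHn : ∀ n x, ENNReal.ofReal (Hn n x) = min (h x) (cn n) := fun n x =>
    ENNReal.ofReal_toReal (ne_top_of_le_ne_top (hcn_ne_top n) (min_le_right _ _))
  have key : ∀ n : ℕ,
      (∫⁻ x, min (f x) (cn n)) ^ (1-t) * (∫⁻ x, min (g x) (cn n)) ^ t ≤ ∫⁻ x, h x := by
    intro n
    have hFnm : Measurable (Fn n) := (hf.min measurable_const).ennreal_toReal
    have hGnm : Measurable (Gn n) := (hg.min measurable_const).ennreal_toReal
    have hHnm : Measurable (Hn n) := (hh.min measurable_const).ennreal_toReal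
    have hhyp_real : ∀ x y : ℝ, Fn n x ^ (1-t) * Gn n y ^ t ≤ Hn n ((1-t)*x + t*y) := by
      intro x y
      have := hyp_trunc n x y
      have h2 := ENNReal.toReal_mono (ne_top_of_le_ne_top (hcn_ne_top n) (min_le_right _ _)) this
      rwa [ENNReal.toReal_mul, ← ENNReal.toReal_rpow, ← ENNReal.toReal_rpow] at h2
    have := one_dim_PL_real (Fn n) (Gn n) (Hn n) ((cn n).toReal)
      hFnm hGnm hHnm
      (fun x => ENNReal.toReal_nonneg) (fun x => ENNReal.toReal_nonneg)
      (fun x => ENNReal.toReal_nonneg)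
      (fun x => ENNReal.toReal_mono (hcn_ne_top n) (min_le_right _ _))
      (fun x => ENNReal.toReal_mono (hcn_ne_top n) (min_le_right _ _))
      t ⟨ht0, ht1⟩ hhyp_real
    simp only [hofFn, hofGn, hofHn] at this
    exact this.trans (lintegral_mono fun x => min_le_left _ _)
  -- monotone convergence
  have hmonoF : Monotone fun n : ℕ => ∫⁻ x, min (f x) (cn n) := by
    intro n m hnm
    exact lintegral_mono fun x => le_min (min_le_left _ _)
      ((min_le_right _ _).trans (by exact add_le_add_left (Nat.cast_le.2 hnm) 1))
  have hmonoG : Monotone fun n : ℕ => ∫⁻ x, min (g x) (cn n) := by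
    intro n m hnm
    exact lintegral_mono fun x => le_min (min_le_left _ _)
      ((min_le_right _ _).trans (by exact add_le_add_left (Nat.cast_le.2 hnm) 1))
  have hsupF : (⨆ n : ℕ, ∫⁻ x, min (f x) (cn n)) = ∫⁻ x, f x := by
    rw [← lintegral_iSup (fun n => hf.min measurable_const)
      (fun n m hnm => fun x => le_min (min_le_left _ _)
        ((min_le_right _ _).trans (by exact add_le_add_left (Nat.cast_le.2 hnm) 1)))]
    congr 1 with x
    exact isup_min_nat' (f x)
  have hsupG : (⨆ n : ℕ, ∫⁻ x, min (g x) (cn n)) = ∫⁻ x, g x := by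
    rw [← lintegral_iSup (fun n => hg.min measurable_const)
      (fun n m hnm => fun x => le_min (min_le_left _ _)
        ((min_le_right _ _).trans (by exact add_le_add_left (Nat.cast_le.2 hnm) 1)))]
    congr 1 with x
    exact isup_min_nat' (g x)
  rw [← hsupF, ← hsupG, ennreal_isup_rpow _ _ h1t, ennreal_isup_rpow _ _ ht0,
    ENNReal.iSup_mul]
  refine iSup_le fun n => ?_
  rw [ENNReal.mul_iSup]
  refine iSup_le fun m => ?_
  calc (∫⁻ x, min (f x) (cn n)) ^ (1-t) * (∫⁻ x, min (g x) (cn m)) ^ t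
      ≤ (∫⁻ x, min (f x) (cn (max n m))) ^ (1-t) * (∫⁻ x, min (g x) (cn (max n m))) ^ t :=
        mul_le_mul' (ENNReal.rpow_le_rpow (hmonoF (le_max_left n m)) h1t.le)
          (ENNReal.rpow_le_rpow (hmonoG (le_max_right n m)) ht0.le)
    _ ≤ ∫⁻ x, h x := key (max n m)

lemma cons_combo (n : ℕ) (t : ℝ) (x1 x2 : ℝ) (w1 w2 : Fin n → ℝ) :
    (1-t) • (Fin.cons x1 w1 : Fin (n+1) → ℝ) + t • (Fin.cons x2 w2 : Fin (n+1) → ℝ)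
      = Fin.cons ((1-t)*x1 + t*x2) ((1-t) • w1 + t • w2) := by
  funext i
  refine Fin.cases ?_ ?_ i
  · simp
  · intro j; simp

lemma cons_measurable (n : ℕ) :
    Measurable (fun q : ℝ × (Fin n → ℝ) => (Fin.cons q.1 q.2 : Fin (n+1) → ℝ)) := by
  apply measurable_pi_lambda
  intro i
  refine Fin.cases ?_ ?_ i
  · simpa using measurable_fst
  · intro j
    simp only [Fin.cons_succ]
    exact (measurable_pi_apply j).comp measurable_snd

lemma cons_measurable_right (n : ℕ) (x : ℝ) :
    Measurable (fun w : Fin n → ℝ => (Fin.cons x w : Fin (n+1) → ℝ)) :=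
  (cons_measurable n).comp (measurable_const.prodMk measurable_id)

lemma pi_PL : ∀ (n : ℕ) (f g h : (Fin n → ℝ) → ℝ≥0∞),
    Measurable f → Measurable g → Measurable h →
    ∀ t : ℝ, t ∈ Set.Ioo (0:ℝ) 1 →
    (∀ x y, f x ^ (1-t) * g y ^ t ≤ h ((1-t) • x + t • y)) →
    (∫⁻ x, f x) ^ (1-t) * (∫⁻ x, g x) ^ t ≤ ∫⁻ x, h x := by
  intro n
  induction n with
  | zero =>
    intro f g h hf hg hh t ht hyp
    have huniv : volume (Set.univ : Set (Fin 0 → ℝ)) = 1 := by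
      rw [volume_pi, Measure.pi_univ]
      simp
    have hint : ∀ u : (Fin 0 → ℝ) → ℝ≥0∞, ∫⁻ x, u x = u default := by
      intro u
      rw [lintegral_unique, huniv, mul_one]
      congr 1
      exact Subsingleton.elim _ _
    rw [hint f, hint g, hint h]
    have hd : ((1-t) • (default : Fin 0 → ℝ) + t • default) = default := Subsingleton.elim _ _
    have h2 := hyp default default
    rwa [hd] at h2
  | succ n IH =>
    intro f g h hf hg hh t ht hyp
    obtain ⟨ht0, ht1⟩ := ht
    have h1t : (0:ℝ) < 1 - t := by linarith
    set φf : ℝ → ℝ≥0∞ := fun x => ∫⁻ w, f (Fin.cons x w) with hφf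
    set φg : ℝ → ℝ≥0∞ := fun x => ∫⁻ w, g (Fin.cons x w) with hφg
    set φh : ℝ → ℝ≥0∞ := fun x => ∫⁻ w, h (Fin.cons x w) with hφh
    have hφfm : Measurable φf := Measurable.lintegral_prod_right (hf.comp (cons_measurable n))
    have hφgm : Measurable φg := Measurable.lintegral_prod_right (hg.comp (cons_measurable n))
    have hφhm : Measurable φh := Measurable.lintegral_prod_right (hh.comp (cons_measurable n))
    have hyp1 : ∀ x1 x2 : ℝ, φf x1 ^ (1-t) * φg x2 ^ t ≤ φh ((1-t)*x1 + t*x2) := by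
      intro x1 x2
      apply IH (fun w => f (Fin.cons x1 w)) (fun w => g (Fin.cons x2 w))
        (fun w => h (Fin.cons ((1-t)*x1 + t*x2) w))
        (hf.comp (cons_measurable_right n x1)) (hg.comp (cons_measurable_right n x2))
        (hh.comp (cons_measurable_right n _)) t ⟨ht0, ht1⟩
      intro w1 w2
      have := hyp (Fin.cons x1 w1) (Fin.cons x2 w2)
      rwa [cons_combo] at this
    have key := one_dim_PL φf φg φh hφfm hφgm hφhm t ⟨ht0, ht1⟩ hyp1
    -- Fubini
    have fub : ∀ u : (Fin (n+1) → ℝ) → ℝ≥0∞, Measurable u →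
        ∫⁻ x, (∫⁻ w, u (Fin.cons x w)) = ∫⁻ z, u z := by
      intro u hu
      have mp := volume_preserving_piFinSuccAbove (fun _ : Fin (n+1) => ℝ) 0
      have h1 := MeasurePreserving.lintegral_comp mp
        (show Measurable fun q : ℝ × (Fin n → ℝ) => u (Fin.cons q.1 q.2)
          from hu.comp (cons_measurable n))
      have h2 : ∀ a : Fin (n+1) → ℝ,
          u (Fin.cons ((MeasurableEquiv.piFinSuccAbove (fun _ => ℝ) 0) a).1
            ((MeasurableEquiv.piFinSuccAbove (fun _ => ℝ) 0) a).2) = u a := by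
        intro a
        congr 1
        simp [MeasurableEquiv.piFinSuccAbove, Fin.insertNthEquiv, Fin.removeNth_zero,
          Fin.cons_self_tail]
      calc ∫⁻ x, ∫⁻ w, u (Fin.cons x w)
          = ∫⁻ q : ℝ × (Fin n → ℝ), u (Fin.cons q.1 q.2) ∂(volume.prod volume) :=
            (lintegral_prod _ ((hu.comp (cons_measurable n)).aemeasurable)).symm
        _ = ∫⁻ q : ℝ × (Fin n → ℝ), u (Fin.cons q.1 q.2) := by rw [← Measure.volume_eq_prod]
        _ = ∫⁻ z, u z := by
            rw [← h1]
            exact lintegral_congr fun a => h2 a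
    rw [← fub f hf, ← fub g hg, ← fub h hh]
    exact key

lemma logconcave_ne_top (m : ℕ) (M : (Fin m → ℝ) → ℝ≥0∞) (hM : Measurable M)
    (hlc : ∀ a b : Fin m → ℝ,
      M a ^ ((1:ℝ)/2) * M b ^ ((1:ℝ)/2) ≤ M ((1 - (1:ℝ)/2) • a + ((1:ℝ)/2) • b))
    (hne : ∫⁻ x, M x ≠ 0) (hfin : ∫⁻ x, M x ≠ ⊤) (x0 : Fin m → ℝ) : M x0 ≠ ⊤ := by
  intro htop
  set S := {x : Fin m → ℝ | M x ≠ 0} with hS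
  have hSm : MeasurableSet S := (hM (measurableSet_singleton 0)).compl
  have hSpos : volume S ≠ 0 := by
    intro h0
    apply hne
    rw [lintegral_eq_zero_iff hM]
    exact ae_iff.mpr (by simpa [hS] using h0)
  have hT : volume {x : Fin m → ℝ | M x = ⊤} = 0 := by
    have h1 := ae_iff.1 (ae_lt_top hM hfin)
    simpa [lt_top_iff_ne_top] using h1
  set ψ : (Fin m → ℝ) → (Fin m → ℝ) := fun z => (1 - (1:ℝ)/2) • x0 + ((1:ℝ)/2) • z with hψ
  have himg : ψ '' S ⊆ {x | M x = ⊤} := by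
    rintro _ ⟨z, hz, rfl⟩
    have h1 := hlc x0 z
    rw [htop] at h1
    have h2 : (⊤ : ℝ≥0∞) ^ ((1:ℝ)/2) = ⊤ := ENNReal.top_rpow_of_pos (by norm_num)
    rw [h2] at h1
    have h3 : M z ^ ((1:ℝ)/2) ≠ 0 := by
      simp only [Ne, ENNReal.rpow_eq_zero_iff, not_or, not_and_or]
      exact ⟨Or.inl hz, Or.inr (by norm_num)⟩
    rw [ENNReal.top_mul h3] at h1
    exact top_le_iff.1 h1
  have hψS : volume (ψ '' S) = 0 := measure_mono_null himg hT
  have himage_eq : ψ '' S = (fun y => (1 - (1:ℝ)/2) • x0 + y) '' (((1:ℝ)/2) • S) := by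
    rw [← Set.image_smul, Set.image_image]
  have hvol1 : volume (ψ '' S) = volume (((1:ℝ)/2) • S) := by
    rw [himage_eq, Set.image_add_left]
    exact measure_preimage_add volume _ _
  have hvol2 : volume (((1:ℝ)/2) • S)
      = ENNReal.ofReal (|((1:ℝ)/2) ^ Module.finrank ℝ (Fin m → ℝ)|) * volume S :=
    Measure.addHaar_smul volume _ S
  rw [hvol1, hvol2] at hψS
  rcases (mul_eq_zero.1 hψS) with hc | hc
  · rw [ENNReal.ofReal_eq_zero] at hc
    have : (0:ℝ) < |((1:ℝ)/2) ^ Module.finrank ℝ (Fin m → ℝ)| := by positivity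
    linarith
  · exact hSpos hc

/-- Prékopa–Leindler marginalization: the marginal of a log-concave
probability density is log-concave. -/
theorem marginal_of_logConcave
    (m k : ℕ)
    (p : (Fin m → ℝ) × (Fin k → ℝ) → ℝ)
    (hp_nonneg : ∀ z, 0 ≤ p z)
    (hp_meas : Measurable p)
    (hp_prob : ∫ z : (Fin m → ℝ) × (Fin k → ℝ), p z = 1)
    (hp_logconcave : ∀ u v : (Fin m → ℝ) × (Fin k → ℝ), ∀ t : ℝ,
      t ∈ Set.Icc (0:ℝ) 1 →
        p ((1 - t) • u + t • v) ≥ p u ^ (1 - t) * p v ^ t) :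
    ∀ u v : Fin m → ℝ, ∀ t : ℝ, t ∈ Set.Icc (0:ℝ) 1 →
      (∫ w : Fin k → ℝ, p ((1 - t) • u + t • v, w))
        ≥ (∫ w : Fin k → ℝ, p (u, w)) ^ (1 - t)
            * (∫ w : Fin k → ℝ, p (v, w)) ^ t := by
  intro u v t ht
  -- trivial endpoint cases
  rcases eq_or_ne t 0 with rfl | ht0'
  · simp [Real.rpow_one, Real.rpow_zero]
  rcases eq_or_ne t 1 with rfl | ht1'
  · simp [Real.rpow_one, Real.rpow_zero]
  have ht0 : 0 < t := lt_of_le_of_ne ht.1 (Ne.symm ht0')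
  have ht1 : t < 1 := lt_of_le_of_ne ht.2 ht1'
  have h1t : (0:ℝ) < 1 - t := by linarith
  -- basic setup
  set P : (Fin m → ℝ) × (Fin k → ℝ) → ℝ≥0∞ := fun z => ENNReal.ofReal (p z) with hP
  have hPm : Measurable P := hp_meas.ennreal_ofReal
  have hint : Integrable p := by
    by_contra hni
    rw [integral_undef hni] at hp_prob
    exact one_ne_zero hp_prob.symm
  have lint_total : ∫⁻ z, P z = 1 := by
    rw [hP]
    rw [← ofReal_integral_eq_lintegral_ofReal hint (Filter.Eventually.of_forall hp_nonneg)]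
    rw [hp_prob]
    simp
  set M : (Fin m → ℝ) → ℝ≥0∞ := fun a => ∫⁻ w, P (a, w) with hM
  have hMm : Measurable M := hPm.lintegral_prod_right'
  have hM_total : ∫⁻ a, M a = 1 := by
    rw [hM]
    rw [← lint_total, Measure.volume_eq_prod, lintegral_prod _ hPm.aemeasurable]
  -- slice measurability
  have hslice : ∀ a : Fin m → ℝ, Measurable fun w => P (a, w) :=
    fun a => hPm.comp (measurable_const.prodMk measurable_id)
  -- log-concavity of M
  have hlcM : ∀ a b : Fin m → ℝ, ∀ s : ℝ, s ∈ Set.Ioo (0:ℝ) 1 →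
      M a ^ (1-s) * M b ^ s ≤ M ((1-s) • a + s • b) := by
    intro a b s hs
    apply pi_PL k (fun w => P (a, w)) (fun w => P (b, w)) (fun w => P ((1-s) • a + s • b, w))
      (hslice a) (hslice b) (hslice _) s hs
    intro w1 w2
    have hkey := hp_logconcave (a, w1) (b, w2) s ⟨hs.1.le, hs.2.le⟩
    have hprod : ((1-s) • ((a, w1) : (Fin m → ℝ) × (Fin k → ℝ)) + s • (b, w2))
        = ((1-s) • a + s • b, (1-s) • w1 + s • w2) := by
      simp [Prod.smul_mk, Prod.mk_add_mk]
    rw [hprod] at hkey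
    calc P (a, w1) ^ (1-s) * P (b, w2) ^ s
        = ENNReal.ofReal (p (a, w1) ^ (1-s) * p (b, w2) ^ s) := by
          rw [ENNReal.ofReal_mul (Real.rpow_nonneg (hp_nonneg _) _),
            hP]
          simp only
          rw [ENNReal.ofReal_rpow_of_nonneg (hp_nonneg _) (by linarith [hs.1, hs.2] : (0:ℝ) ≤ 1-s),
            ENNReal.ofReal_rpow_of_nonneg (hp_nonneg _) hs.1.le]
      _ ≤ P ((1-s) • a + s • b, (1-s) • w1 + s • w2) := ENNReal.ofReal_le_ofReal hkey
  -- finiteness of M everywhere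
  have hMfin : ∀ a, M a ≠ ⊤ := by
    apply logconcave_ne_top m M hMm
    · intro a b
      have := hlcM a b ((1:ℝ)/2) (by norm_num)
      convert this using 3 <;> norm_num
    · rw [hM_total]; exact one_ne_zero
    · rw [hM_total]; exact ENNReal.one_ne_top
  -- Bochner integrals as toReal of M
  have hrepr : ∀ a : Fin m → ℝ, ∫ w, p (a, w) = (M a).toReal := by
    intro a
    rw [hM]
    simp only
    rw [integral_eq_lintegral_of_nonneg_ae (Filter.Eventually.of_forall fun w => hp_nonneg (a, w))
      ((hp_meas.comp (measurable_const.prodMk measurable_id)).aestronglyMeasurable)]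
  rw [hrepr, hrepr, hrepr]
  -- zero cases
  rcases eq_or_ne (M u) 0 with hMu0 | hMu0
  · rw [hMu0]
    simp only [ENNReal.toReal_zero]
    rw [Real.zero_rpow (by linarith : 1 - t ≠ 0), zero_mul]
    exact ENNReal.toReal_nonneg
  rcases eq_or_ne (M v) 0 with hMv0 | hMv0
  · rw [hMv0]
    simp only [ENNReal.toReal_zero]
    rw [Real.zero_rpow (by linarith : t ≠ 0), mul_zero]
    exact ENNReal.toReal_nonneg
  -- main case
  have hmain := hlcM u v t ⟨ht0, ht1⟩
  have hto := ENNReal.toReal_mono (hMfin _) hmain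
  rw [ENNReal.toReal_mul, ← ENNReal.toReal_rpow, ← ENNReal.toReal_rpow] at hto
  exact hto
end
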